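/- The group reflexion of the Sorgenfrey line 𝕃 is the real line with its usual topology; that is, the strongest group topology on ℝ weaker than the Sorgenfrey topology is the Euclidean topology. -/

import Mathlib

open Topology Filter


/-- The Sorgenfrey topology on the real line, generated by half-open intervals `[a, b)`. -/
def sorgenfrey : TopologicalSpace ℝ :=
  TopologicalSpace.generateFrom {s : Set ℝ | ∃ a b : ℝ, a < b ∧ s = Set.Ico a b}

lemma sorgenfrey_nhds {s : Set ℝ} (hs : sorgenfrey.IsOpen s) :
    ∀ x ∈ s, ∃ ε > 0, Set.Ico x (x + ε) ⊆ s := by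
  induction hs with
  | basic u hu =>
      rintro x hx
      obtain ⟨a, b, hab, rfl⟩ := hu
      refine ⟨b - x, by simp [hx.2], ?_⟩
      rintro y ⟨hy1, hy2⟩
      exact ⟨le_trans hx.1 hy1, by linarith⟩
  | univ => exact fun x _ => ⟨1, one_pos, fun y _ => trivial⟩
  | inter u v hu hv ihu ihv =>
      rintro x ⟨hxu, hxv⟩
      obtain ⟨ε₁, hε₁, h₁⟩ := ihu x hxu
      obtain ⟨ε₂, hε₂, h₂⟩ := ihv x hxv
      refine ⟨min ε₁ ε₂, lt_min hε₁ hε₂, fun y hy => ⟨h₁ ⟨hy.1, ?_⟩, h₂ ⟨hy.1, ?_⟩⟩⟩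
      · exact lt_of_lt_of_le hy.2 (by have := min_le_left ε₁ ε₂; linarith)
      · exact lt_of_lt_of_le hy.2 (by have := min_le_right ε₁ ε₂; linarith)
  | sUnion S hS ih =>
      rintro x ⟨u, hu, hxu⟩
      obtain ⟨ε, hε, h⟩ := ih u hu x hxu
      exact ⟨ε, hε, fun y hy => ⟨u, hu, h hy⟩⟩

lemma euclid_open_sorgenfrey {s : Set ℝ} (hs : IsOpen s) : sorgenfrey.IsOpen s := by
  have key : ∀ x ∈ s, ∃ ε > 0, Set.Ico x (x + ε) ⊆ s := by
    intro x hx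
    obtain ⟨ε, hε, h⟩ := Metric.isOpen_iff.1 hs x hx
    refine ⟨ε, hε, fun y hy => h ?_⟩
    have h1 := hy.1
    have h2 := hy.2
    simp only [Metric.mem_ball, Real.dist_eq, abs_lt]
    constructor <;> linarith
  choose! f hf hf' using key
  have hrw : s = ⋃₀ {u | ∃ x ∈ s, u = Set.Ico x (x + f x)} := by
    apply subset_antisymm
    · intro x hx
      exact ⟨Set.Ico x (x + f x), ⟨x, hx, rfl⟩,
        le_refl x, by have := hf x hx; linarith⟩
    · rintro y ⟨u, ⟨x, hx, rfl⟩, hy⟩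
      exact hf' x hx hy
  rw [hrw]
  refine TopologicalSpace.GenerateOpen.sUnion _ ?_
  rintro u ⟨x, hx, rfl⟩
  exact TopologicalSpace.GenerateOpen.basic _ ⟨x, x + f x, by have := hf x hx; linarith, rfl⟩

lemma euclid_le_of_group {t : TopologicalSpace ℝ} (hst : sorgenfrey ≤ t)
    (hgt : @IsTopologicalAddGroup ℝ t _) :
    (UniformSpace.toTopologicalSpace : TopologicalSpace ℝ) ≤ t := by
  rw [TopologicalSpace.le_def]
  intro s hs
  -- hs : t.IsOpen s; goal : IsOpen s (euclidean)
  rw [Metric.isOpen_iff]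
  letI := t
  haveI := hgt
  intro x hx
  set U₀ : Set ℝ := (fun y => x + y) ⁻¹' s with hU₀def
  have hU₀ : IsOpen U₀ := (continuous_const.add continuous_id).isOpen_preimage s hs
  have h0 : (0 : ℝ) ∈ U₀ := by simp [hU₀def, hx]
  have hU₀n : U₀ ∈ 𝓝 (0 : ℝ) := hU₀.mem_nhds h0
  have hUneg : (Neg.neg : ℝ → ℝ) ⁻¹' U₀ ∈ 𝓝 (0 : ℝ) :=
    continuous_neg.continuousAt.preimage_mem_nhds (by simpa using hU₀n)
  obtain ⟨W, hWsub, hWopen, hW0⟩ := mem_nhds_iff.1 (Filter.inter_mem hU₀n hUneg)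
  have hWs : sorgenfrey.IsOpen W := hst W hWopen
  obtain ⟨ε, hε, hIco⟩ := sorgenfrey_nhds hWs 0 hW0
  refine ⟨ε, hε, fun y hy => ?_⟩
  have hxy : |y - x| < ε := by
    have : dist y x < ε := hy
    simpa [Real.dist_eq] using this
  have habs := abs_lt.1 hxy
  by_cases h : x ≤ y
  · have hmem : y - x ∈ W := hIco ⟨by linarith, by linarith [habs.2]⟩
    have := (hWsub hmem).1
    simpa [hU₀def] using this
  · have hmem : -(y - x) ∈ W := hIco ⟨by linarith, by linarith [habs.1]⟩
    have h2 := (hWsub hmem).2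
    simp only [Set.mem_preimage, neg_neg] at h2
    simpa [hU₀def] using h2

/-- The group reflexion of the Sorgenfrey line is the real line with its usual topology:
the Euclidean topology is the least element (i.e., the strongest topology) among all group
topologies on `ℝ` weaker than the Sorgenfrey topology.  (In Mathlib `τ ≤ t` means `τ` is
finer than `t`.) -/
theorem stmt_5 :
    IsLeast {t : TopologicalSpace ℝ | sorgenfrey ≤ t ∧ @IsTopologicalAddGroup ℝ t _}
      (inferInstance : TopologicalSpace ℝ) := by
  constructor
  · refine ⟨?_, inferInstance⟩
    rw [TopologicalSpace.le_def]
    intro s hs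
    exact euclid_open_sorgenfrey hs
  · rintro t ⟨hst, hgt⟩
    exact euclid_le_of_group hst hgt
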